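/- arXiv:cs/0609072 — 5 statements merged into one kernel-verified Lean document; each statement's English description precedes it below -/
import Mathlib

section
/- Every bijunctive logical relation is componentwise bijunctive: if R ⊆ {0,1}^r is closed under the coordinatewise ternary majority operation maj (equivalently, R is the set of solutions of a 2-CNF formula), then every connected component of G(R) is itself closed under coordinatewise majority (i.e., is bijunctive). -/
open SimpleGraph

/-- The solution graph of a set `D ⊆ {0,1}^V`: vertices are the elements of `D`,
two vertices are adjacent iff they differ in exactly one coordinate. -/
def solGraph {V : Type*} [Fintype V] [DecidableEq V] (D : Set (V → Bool)) :
    SimpleGraph D where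
  Adj a b := hammingDist (a : V → Bool) (b : V → Bool) = 1
  symm := ⟨fun a b h => by
    have h' : hammingDist (a : V → Bool) (b : V → Bool) = 1 := h
    show hammingDist (b : V → Bool) (a : V → Bool) = 1
    rwa [hammingDist_comm]⟩
  loopless := ⟨fun a h => by
    have h' : hammingDist (a : V → Bool) (a : V → Bool) = 1 := h
    simp [hammingDist_self] at h'⟩

/-- Coordinatewise ternary majority. -/
def majVec {V : Type*} (a b c : V → Bool) : V → Bool :=
  fun i => (a i && b i) || (b i && c i) || (a i && c i)

/-- `D` is closed under the coordinatewise ternary majority operation. -/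
def ClosedMaj {V : Type*} (D : Set (V → Bool)) : Prop :=
  ∀ a b c, a ∈ D → b ∈ D → c ∈ D → majVec a b c ∈ D

/-- Every connected component of `G(R)` is closed under coordinatewise majority. -/
def CompClosedMaj {V : Type*} [Fintype V] [DecidableEq V] (R : Set (V → Bool)) : Prop :=
  ∀ (a b c : V → Bool) (ha : a ∈ R) (hb : b ∈ R) (hc : c ∈ R),
    (solGraph R).Reachable ⟨a, ha⟩ ⟨b, hb⟩ →
    (solGraph R).Reachable ⟨a, ha⟩ ⟨c, hc⟩ →
    ∃ hm : majVec a b c ∈ R, (solGraph R).Reachable ⟨a, ha⟩ ⟨majVec a b c, hm⟩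

/-- Substitute constants `c` in all but the two coordinates `i ≠ j`. -/
def subst2 {r : ℕ} (i j : Fin r) (c : Fin r → Bool) (x y : Bool) : Fin r → Bool :=
  fun k => if k = i then x else if k = j then y else c k

/-- `R` is OR-free: `{01,10,11}` is not obtainable from `R` by fixing `r - 2` coordinates. -/
def ORfree {r : ℕ} (R : Set (Fin r → Bool)) : Prop :=
  ¬ ∃ (i j : Fin r) (_ : i ≠ j) (c : Fin r → Bool),
      ∀ x y : Bool, subst2 i j c x y ∈ R ↔ (x || y) = true

/-- `R` is NAND-free: `{00,01,10}` is not obtainable from `R` by fixing `r - 2` coordinates. -/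
def NANDfree {r : ℕ} (R : Set (Fin r → Bool)) : Prop :=
  ¬ ∃ (i j : Fin r) (_ : i ≠ j) (c : Fin r → Bool),
      ∀ x y : Bool, subst2 i j c x y ∈ R ↔ (!x || !y) = true

/-- A logical relation together with its arity. -/
def BRel := Σ k : ℕ, Set (Fin k → Bool)

/-- A clause `R(ξ₁,…,ξ_k)` over variables `V`: each argument is a variable or a constant. -/
structure BClause (V : Type*) where
  arity : ℕ
  rel : Set (Fin arity → Bool)
  args : Fin arity → V ⊕ Bool

/-- The clause `C` is satisfied by the assignment `x`. -/
def BClause.Sat {V : Type*} (C : BClause V) (x : V → Bool) : Prop :=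
  (fun j => Sum.elim x id (C.args j)) ∈ C.rel

/-- A CNF formula: a finite conjunction (list) of clauses. -/
abbrev BCnf (V : Type*) := List (BClause V)

/-- `x` satisfies every clause of `φ`. -/
def BCnf.Sat {V : Type*} (φ : BCnf V) (x : V → Bool) : Prop :=
  ∀ C ∈ φ, C.Sat x

/-- `φ` is a CNF(S)-formula: every clause uses a relation from `S`. -/
def BCnf.Over {V : Type*} (S : Set BRel) (φ : BCnf V) : Prop :=
  ∀ C ∈ φ, (⟨C.arity, C.rel⟩ : BRel) ∈ S

/-- The set of solutions of a CNF formula. -/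
def solutionSet {V : Type*} (φ : BCnf V) : Set (V → Bool) := {x | φ.Sat x}

/-- A set of relations is tight if all its members are componentwise bijunctive,
or all are OR-free, or all are NAND-free. -/
def Tight (S : Set BRel) : Prop :=
  (∀ R ∈ S, CompClosedMaj R.2) ∨ (∀ R ∈ S, ORfree R.2) ∨ (∀ R ∈ S, NANDfree R.2)

/-- `R` is faithfully expressible from `S`. -/
def FaithfullyExpressible (S : Set BRel) {k : ℕ} (R : Set (Fin k → Bool)) : Prop :=
  ∃ (m : ℕ) (φ : BCnf (Fin k ⊕ Fin m)),
    φ.Over S ∧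
    (∀ a : Fin k → Bool, a ∈ R ↔ ∃ y : Fin m → Bool, φ.Sat (Sum.elim a y)) ∧
    (∀ a ∈ R, (solGraph {y : Fin m → Bool | φ.Sat (Sum.elim a y)}).Connected) ∧
    (∀ a b, a ∈ R → b ∈ R → hammingDist a b = 1 →
      ∃ w : Fin m → Bool, φ.Sat (Sum.elim a w) ∧ φ.Sat (Sum.elim b w))

/-- `D_i`: satisfying assignments of the 3-clause whose first `i` literals are negated. -/
def Dclause (i : ℕ) : Set (Fin 3 → Bool) :=
  {x | ∃ j : Fin 3, if (j : ℕ) < i then x j = false else x j = true}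

/-- `S₃ = {D₀, D₁, D₂, D₃}`: the set of 3-clause relations. -/
def S3 : Set BRel :=
  {⟨3, Dclause 0⟩, ⟨3, Dclause 1⟩, ⟨3, Dclause 2⟩, ⟨3, Dclause 3⟩}

/-- Every bijunctive relation (closed under coordinatewise majority)
is componentwise bijunctive. -/
theorem bijunctive_is_componentwise_bijunctive {r : ℕ}
    (R : Set (Fin r → Bool)) (hR : R.Nonempty)
    (hmaj : ClosedMaj R) :
    CompClosedMaj R := by
  intro a b c ha hb hc hab _hac
  have hm : majVec a b c ∈ R := hmaj a b c ha hb hc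
  refine ⟨hm, ?_⟩
  -- majVec a a c = a and majVec a b c is the target.
  have key : ∀ {u v : R}, (solGraph R).Walk u v →
      (solGraph R).Reachable
        ⟨majVec a (u : Fin r → Bool) c, hmaj a u c ha u.2 hc⟩
        ⟨majVec a (v : Fin r → Bool) c, hmaj a v c ha v.2 hc⟩ := by
    intro u v w
    induction w with
    | nil => exact SimpleGraph.Reachable.refl _
    | @cons x y z hadj p ih =>
      refine SimpleGraph.Reachable.trans ?_ ih
      have hdist : hammingDist (x : Fin r → Bool) (y : Fin r → Bool) = 1 := hadj
      have hsub : hammingDist (majVec a (x : Fin r → Bool) c)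
          (majVec a (y : Fin r → Bool) c) ≤ 1 := by
        rw [← hdist]
        unfold hammingDist
        apply Finset.card_le_card
        intro i hi
        simp only [Finset.mem_filter, Finset.mem_univ, true_and] at hi ⊢
        intro hxy
        exact hi (by simp [majVec, hxy])
      interval_cases h : hammingDist (majVec a (x : Fin r → Bool) c)
          (majVec a (y : Fin r → Bool) c)
      · have heq : majVec a (x : Fin r → Bool) c = majVec a (y : Fin r → Bool) c :=
          hammingDist_eq_zero.mp h
        have heq' : (⟨majVec a (x : Fin r → Bool) c, hmaj a x c ha x.2 hc⟩ : R) =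
            ⟨majVec a (y : Fin r → Bool) c, hmaj a y c ha y.2 hc⟩ := Subtype.ext heq
        rw [heq']
      · exact SimpleGraph.Adj.reachable h
  obtain ⟨w⟩ := hab
  have := key w
  have haa : majVec a a c = a := by
    funext i; simp only [majVec]; cases a i <;> cases c i <;> rfl
  convert this using 2
  exact haa.symm
end

section
/- Every affine logical relation is componentwise bijunctive, OR-free, and NAND-free: if R ⊆ {0,1}^r is closed under the ternary coordinatewise operation a ⊕ b ⊕ c (equivalently, R is the set of solutions of a system of linear equations over Z_2), then (i) every connected component of G(R) is closed under coordinatewise majority, (ii) OR = {01,10,11} is not obtainable from R by fixing r−2 coordinates, and (iii) NAND = {00,01,10} is not obtainable from R by fixing r−2 coordinates. -/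
open SimpleGraph

/-- Every affine relation (closed under coordinatewise `a ⊕ b ⊕ c`) is
componentwise bijunctive, OR-free, and NAND-free. -/
theorem affine_is_componentwiseBijunctive_ORfree_NANDfree {r : ℕ}
    (R : Set (Fin r → Bool)) (hR : R.Nonempty)
    (hxor : ∀ a b c, a ∈ R → b ∈ R → c ∈ R →
      (fun i => xor (a i) (xor (b i) (c i))) ∈ R) :
    CompClosedMaj R ∧ ORfree R ∧ NANDfree R := by
  classical
  -- the set of "edge directions" of R
  set Dir : Set (Fin r) :=
    {i | ∃ u v, u ∈ R ∧ v ∈ R ∧ (∀ k, k ≠ i → u k = v k) ∧ u i ≠ v i} with hDirDef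
  -- flipping any coordinate in Dir preserves membership in R
  have flip : ∀ i ∈ Dir, ∀ x ∈ R, (fun k => if k = i then !x k else x k) ∈ R := by
    rintro i ⟨u, v, hu, hv, heq, hne⟩ x hx
    have hmem := hxor u v x hu hv hx
    have hfun : (fun k => if k = i then !x k else x k)
        = (fun k => xor (u k) (xor (v k) (x k))) := by
      funext k
      by_cases hk : k = i
      · subst hk
        simp only [if_pos rfl]
        revert hne
        cases u k <;> cases v k <;> cases x k <;> decide
      · simp only [if_neg hk]
        rw [heq k hk]
        cases v k <;> cases x k <;> rfl
    rw [hfun]; exact hmem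
  -- flipping a set of coordinates in Dir keeps membership and reachability
  have step : ∀ s : Finset (Fin r), (∀ i ∈ s, i ∈ Dir) → ∀ x, ∀ hx : x ∈ R,
      ∃ hy : (fun k => if k ∈ s then !x k else x k) ∈ R,
        (solGraph R).Reachable ⟨x, hx⟩ ⟨_, hy⟩ := by
    intro s
    induction s using Finset.induction_on with
    | empty =>
      intro _ x hx
      have : (fun k => if k ∈ (∅ : Finset (Fin r)) then !x k else x k) = x := by
        funext k; simp
      rw [this]
      exact ⟨hx, SimpleGraph.Reachable.refl _⟩
    | @insert i s his ih =>
      intro hsub x hx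
      obtain ⟨hy, hreach⟩ := ih (fun j hj => hsub j (Finset.mem_insert_of_mem hj)) x hx
      set y : Fin r → Bool := fun k => if k ∈ s then !x k else x k with hydef
      have hz := flip i (hsub i (Finset.mem_insert_self i s)) y hy
      set z : Fin r → Bool := fun k => if k = i then !y k else y k with hzdef
      have hzy : (fun k => if k ∈ insert i s then !x k else x k) = z := by
        funext k
        by_cases hk : k = i
        · subst hk
          rw [if_pos (Finset.mem_insert_self k s)]
          simp only [hzdef, if_pos rfl, hydef, if_neg his]
        · by_cases hks : k ∈ s
          · rw [if_pos (Finset.mem_insert_of_mem hks)]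
            simp only [hzdef, if_neg hk, hydef, if_pos hks]
          · rw [if_neg (by simp [Finset.mem_insert, hk, hks])]
            simp only [hzdef, if_neg hk, hydef, if_neg hks]
      have hadj : (solGraph R).Adj ⟨y, hy⟩ ⟨z, hz⟩ := by
        show hammingDist y z = 1
        have : Finset.univ.filter (fun k => y k ≠ z k) = {i} := by
          ext k
          simp only [Finset.mem_filter, Finset.mem_univ, true_and, Finset.mem_singleton]
          constructor
          · intro hk
            by_contra hki
            apply hk
            simp [hzdef, if_neg hki]
          · intro hk
            subst hk
            simp only [hzdef, if_pos rfl]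
            cases y k <;> decide
        show (Finset.univ.filter (fun k => y k ≠ z k)).card = 1
        rw [this, Finset.card_singleton]
      rw [hzy]
      exact ⟨hz, hreach.trans hadj.reachable⟩
  -- along a walk, all differing coordinates are in Dir
  have walkdiff : ∀ (u v : R) (w : (solGraph R).Walk u v) (k : Fin r),
      (u : Fin r → Bool) k ≠ (v : Fin r → Bool) k → k ∈ Dir := by
    intro u v w
    induction w with
    | nil => intro k hk; exact absurd rfl hk
    | @cons p q t hadj w ih =>
      intro k hk
      have h1 : hammingDist (p : Fin r → Bool) (q : Fin r → Bool) = 1 := hadj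
      have h1' : (Finset.univ.filter
          (fun k => (p : Fin r → Bool) k ≠ (q : Fin r → Bool) k)).card = 1 := h1
      obtain ⟨i0, hi0⟩ := Finset.card_eq_one.mp h1'
      by_cases hpq : (p : Fin r → Bool) k = (q : Fin r → Bool) k
      · exact ih k (fun h => hk (hpq.trans h))
      · have hki : k = i0 := by
          have : k ∈ Finset.univ.filter
              (fun k => (p : Fin r → Bool) k ≠ (q : Fin r → Bool) k) := by
            simp [hpq]
          rwa [hi0, Finset.mem_singleton] at this
        refine ⟨p, q, p.2, q.2, ?_, hpq⟩
        intro j hj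
        by_contra hne
        have : j ∈ Finset.univ.filter
            (fun k => (p : Fin r → Bool) k ≠ (q : Fin r → Bool) k) := by
          simp [hne]
        rw [hi0, Finset.mem_singleton] at this
        exact hj (this.trans hki.symm)
  refine ⟨?_, ?_, ?_⟩
  · -- componentwise bijunctive
    intro a b c ha hb hc hab hac
    set s : Finset (Fin r) :=
      Finset.univ.filter (fun k => a k ≠ b k ∧ a k ≠ c k) with hsdef
    have hsub : ∀ i ∈ s, i ∈ Dir := by
      intro i hi
      rw [hsdef, Finset.mem_filter] at hi
      obtain ⟨w⟩ := hab
      exact walkdiff _ _ w i hi.2.1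
    obtain ⟨hy, hreach⟩ := step s hsub a ha
    have hmaj : majVec a b c = (fun k => if k ∈ s then !a k else a k) := by
      funext k
      simp only [hsdef, Finset.mem_filter, Finset.mem_univ, true_and, majVec]
      by_cases h1 : a k = b k
      · rw [if_neg (by rintro ⟨h, -⟩; exact h h1)]
        rw [← h1]
        cases a k <;> cases c k <;> rfl
      · by_cases h2 : a k = c k
        · rw [if_neg (by rintro ⟨-, h⟩; exact h h2)]
          rw [← h2]
          cases a k <;> cases b k <;> rfl
        · rw [if_pos ⟨h1, h2⟩]
          have hb' : b k = !a k := by revert h1; cases a k <;> cases b k <;> decide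
          have hc' : c k = !a k := by revert h2; cases a k <;> cases c k <;> decide
          rw [hb', hc']
          cases a k <;> rfl
    rw [hmaj]
    exact ⟨hy, hreach⟩
  · -- OR-free
    rintro ⟨i, j, hij, c, h⟩
    have h1 : subst2 i j c true false ∈ R := (h true false).mpr rfl
    have h2 : subst2 i j c false true ∈ R := (h false true).mpr rfl
    have h3 : subst2 i j c true true ∈ R := (h true true).mpr rfl
    have hm := hxor _ _ _ h1 h2 h3
    have : (fun k => xor (subst2 i j c true false k)
        (xor (subst2 i j c false true k) (subst2 i j c true true k)))
        = subst2 i j c false false := by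
      funext k
      simp only [subst2]
      by_cases hk : k = i
      · simp [hk]
      · by_cases hk' : k = j
        · simp [hk, hk']
        · simp only [if_neg hk, if_neg hk']
          cases c k <;> rfl
    rw [this] at hm
    have := (h false false).mp hm
    simp at this
  · -- NAND-free
    rintro ⟨i, j, hij, c, h⟩
    have h1 : subst2 i j c false false ∈ R := (h false false).mpr rfl
    have h2 : subst2 i j c false true ∈ R := (h false true).mpr rfl
    have h3 : subst2 i j c true false ∈ R := (h true false).mpr rfl
    have hm := hxor _ _ _ h1 h2 h3
    have : (fun k => xor (subst2 i j c false false k)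
        (xor (subst2 i j c false true k) (subst2 i j c true false k)))
        = subst2 i j c true true := by
      funext k
      simp only [subst2]
      by_cases hk : k = i
      · simp [hk]
      · by_cases hk' : k = j
        · simp [hk, hk']
        · simp only [if_neg hk, if_neg hk']
          cases c k <;> rfl
    rw [this] at hm
    have := (h true true).mp hm
    simp at this
end

section
/- Let D ⊆ {0,1}^n be closed under the coordinatewise ternary majority operation (for instance, the solution set of a 2-CNF formula). If a, b ∈ D lie in the same connected component of G(D), then the shortest-path distance between a and b in G(D) equals their Hamming distance |a − b|; moreover, there is a path in G(D) from a to b that flips only coordinates on which a and b differ, each exactly once. -/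
open SimpleGraph

section Aux

variable {n : ℕ}

lemma majVec_left (a b : Fin n → Bool) : majVec a a b = a := by
  funext i; simp only [majVec]; cases a i <;> cases b i <;> rfl

lemma majVec_right (a b : Fin n → Bool) : majVec a b b = b := by
  funext i; simp only [majVec]; cases a i <;> cases b i <;> rfl

lemma majVec_interval (a b u : Fin n → Bool) {i : Fin n} (h : a i = b i) :
    majVec a u b i = a i := by
  simp only [majVec]; rw [← h]; cases a i <;> cases u i <;> rfl

lemma hammingDist_majVec_le (a b u v : Fin n → Bool) :
    hammingDist (majVec a u b) (majVec a v b) ≤ hammingDist u v := by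
  classical
  apply Finset.card_le_card
  intro j hj
  simp only [Finset.mem_filter, Finset.mem_univ, true_and] at *
  intro h
  exact hj (by simp [majVec, h])

lemma hamming_le_walk_length {D : Set (Fin n → Bool)} :
    ∀ {x y : D} (p : (solGraph D).Walk x y),
      hammingDist (x : Fin n → Bool) (y : Fin n → Bool) ≤ p.length := by
  intro x y p
  induction p with
  | nil => simp
  | @cons x w y h p ih =>
      have h1 : hammingDist (x : Fin n → Bool) (w : Fin n → Bool) = 1 := h
      calc hammingDist (x : Fin n → Bool) (y : Fin n → Bool)
          ≤ hammingDist (x : Fin n → Bool) (w : Fin n → Bool)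
            + hammingDist (w : Fin n → Bool) (y : Fin n → Bool) :=
            hammingDist_triangle _ _ _
        _ ≤ 1 + p.length := by rw [h1]; omega
        _ = (SimpleGraph.Walk.cons h p).length := by
            rw [SimpleGraph.Walk.length_cons]; omega

lemma retract_aux {D : Set (Fin n → Bool)} (hmaj : ClosedMaj D)
    (a b : Fin n → Bool) (ha : a ∈ D) (hb : b ∈ D) :
    ∀ {x y : D} (_ : (solGraph D).Walk x y),
    ∃ q : (solGraph D).Walk ⟨majVec a x b, hmaj a x b ha x.2 hb⟩
        ⟨majVec a y b, hmaj a y b ha y.2 hb⟩,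
      ∀ u ∈ q.support, ∀ i, a i = b i → (u : Fin n → Bool) i = a i := by
  intro x y p
  induction p with
  | nil =>
      refine ⟨SimpleGraph.Walk.nil, ?_⟩
      intro u hu i hi
      simp only [SimpleGraph.Walk.support_nil, List.mem_singleton] at hu
      subst hu
      exact majVec_interval a b _ hi
  | @cons x w y h p ih =>
      obtain ⟨q', hq'⟩ := ih
      by_cases heq : (⟨majVec a x b, hmaj a x b ha x.2 hb⟩ : D)
          = ⟨majVec a w b, hmaj a w b ha w.2 hb⟩
      · refine ⟨q'.copy heq.symm rfl, ?_⟩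
        intro u hu
        rw [SimpleGraph.Walk.support_copy] at hu
        exact hq' u hu
      · have h1 : hammingDist (x : Fin n → Bool) (w : Fin n → Bool) = 1 := h
        have hle : hammingDist (majVec a x b) (majVec a w b) ≤ 1 := by
          rw [← h1]; exact hammingDist_majVec_le a b _ _
        have hne : hammingDist (majVec a x b) (majVec a w b) ≠ 0 := by
          intro h0
          exact heq (Subtype.ext (hammingDist_eq_zero.mp h0))
        have hadj : (solGraph D).Adj ⟨majVec a x b, hmaj a x b ha x.2 hb⟩
            ⟨majVec a w b, hmaj a w b ha w.2 hb⟩ := by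
          show hammingDist (majVec a x b) (majVec a w b) = 1
          omega
        refine ⟨SimpleGraph.Walk.cons hadj q', ?_⟩
        intro u hu i hi
        rw [SimpleGraph.Walk.support_cons, List.mem_cons] at hu
        rcases hu with hu | hu
        · subst hu; exact majVec_interval a b _ hi
        · exact hq' u hu i hi

lemma retract {D : Set (Fin n → Bool)} (hmaj : ClosedMaj D)
    {a b : Fin n → Bool} {ha : a ∈ D} {hb : b ∈ D}
    (hr : (solGraph D).Reachable ⟨a, ha⟩ ⟨b, hb⟩) :
    ∃ q : (solGraph D).Walk ⟨a, ha⟩ ⟨b, hb⟩,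
      ∀ u ∈ q.support, ∀ i, a i = b i → (u : Fin n → Bool) i = a i := by
  obtain ⟨p⟩ := hr
  obtain ⟨q, hq⟩ := retract_aux hmaj a b ha hb p
  refine ⟨q.copy (Subtype.ext (majVec_left a b)) (Subtype.ext (majVec_right a b)), ?_⟩
  intro u hu
  rw [SimpleGraph.Walk.support_copy] at hu
  exact hq u hu

lemma key {D : Set (Fin n → Bool)} (hmaj : ClosedMaj D) :
    ∀ (h : ℕ) (a b : Fin n → Bool) (ha : a ∈ D) (hb : b ∈ D),
      hammingDist a b = h → (solGraph D).Reachable ⟨a, ha⟩ ⟨b, hb⟩ →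
      ∃ p : (solGraph D).Walk ⟨a, ha⟩ ⟨b, hb⟩, p.length = h ∧
        ∀ u ∈ p.support, ∀ i, a i = b i → (u : Fin n → Bool) i = a i := by
  intro h
  induction h with
  | zero =>
      intro a b ha hb hd _
      have hab : a = b := hammingDist_eq_zero.mp hd
      subst hab
      refine ⟨SimpleGraph.Walk.nil, rfl, ?_⟩
      intro u hu i _
      simp only [SimpleGraph.Walk.support_nil, List.mem_singleton] at hu
      subst hu; rfl
  | succ h ih =>
      intro a b ha hb hd hr
      obtain ⟨q, hq⟩ := retract hmaj hr
      have hab : (⟨a, ha⟩ : D) ≠ ⟨b, hb⟩ := by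
        intro he
        have : a = b := congrArg Subtype.val he
        rw [this, hammingDist_self] at hd; omega
      obtain ⟨w, hadj, q', rfl⟩ := q.exists_eq_cons_of_ne hab
      have h1 : hammingDist a (w : Fin n → Bool) = 1 := hadj
      have hw_supp : (w : D) ∈ (SimpleGraph.Walk.cons hadj q').support := by
        rw [SimpleGraph.Walk.support_cons]
        exact List.mem_cons_of_mem _ q'.start_mem_support
      have hw_int : ∀ i, a i = b i → (w : Fin n → Bool) i = a i :=
        hq w hw_supp
      -- the differing set of (w, b) is that of (a, b) minus that of (a, w)
      classical
      have hsub : (Finset.univ.filter fun i => a i ≠ (w : Fin n → Bool) i)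
          ⊆ (Finset.univ.filter fun i => a i ≠ b i) := by
        intro j hj
        simp only [Finset.mem_filter, Finset.mem_univ, true_and] at *
        intro hab'
        exact hj (hw_int j hab').symm
      have hset : (Finset.univ.filter fun i => (w : Fin n → Bool) i ≠ b i)
          = (Finset.univ.filter fun i => a i ≠ b i)
            \ (Finset.univ.filter fun i => a i ≠ (w : Fin n → Bool) i) := by
        ext j
        simp only [Finset.mem_sdiff, Finset.mem_filter, Finset.mem_univ, true_and]
        constructor
        · intro hj
          by_cases haw : a j = (w : Fin n → Bool) j
          · exact ⟨by rw [haw]; exact hj, by simp [haw]⟩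
          · exfalso
            have : a j ≠ b j := fun hab' => haw ((hw_int j hab').symm)
            revert hj haw this
            cases a j <;> cases (w : Fin n → Bool) j <;> cases b j <;> simp
        · rintro ⟨hj1, hj2⟩
          simp only [not_not] at hj2
          rw [← hj2]; exact hj1
      have hwb : hammingDist (w : Fin n → Bool) b = h := by
        have hcard1 : (Finset.univ.filter fun i => a i ≠ (w : Fin n → Bool) i).card = 1 := h1
        have : hammingDist (w : Fin n → Bool) b
            = (hammingDist a b)
              - (Finset.univ.filter fun i => a i ≠ (w : Fin n → Bool) i).card := by
          show (Finset.univ.filter fun i => (w : Fin n → Bool) i ≠ b i).card = _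
          rw [hset, Finset.card_sdiff_of_subset hsub]; rfl
        rw [this, hcard1, hd]; omega
      obtain ⟨r, hrlen, hrint⟩ := ih (w : Fin n → Bool) b w.2 hb
        (by rw [← hwb]) ⟨q'.copy (Subtype.ext rfl) rfl⟩
      refine ⟨SimpleGraph.Walk.cons hadj (r.copy (Subtype.ext rfl) rfl), ?_, ?_⟩
      · rw [SimpleGraph.Walk.length_cons, SimpleGraph.Walk.length_copy, hrlen]
      · intro u hu i hi
        rw [SimpleGraph.Walk.support_cons, List.mem_cons] at hu
        rcases hu with hu | hu
        · subst hu; rfl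
        · rw [SimpleGraph.Walk.support_copy] at hu
          have hwi : (w : Fin n → Bool) i = a i := hw_int i hi
          have : (u : Fin n → Bool) i = (w : Fin n → Bool) i :=
            hrint u hu i (by rw [hwi, hi])
          rw [this, hwi]

end Aux

/-- In a set `D ⊆ {0,1}^n` closed under coordinatewise majority, the
shortest-path distance in `G(D)` between two connected solutions equals their Hamming
distance; moreover there is a path flipping only coordinates where `a` and `b` differ,
each exactly once. -/
theorem maj_closed_dist_eq_hammingDist {n : ℕ}
    (D : Set (Fin n → Bool)) (hmaj : ClosedMaj D)
    (a b : Fin n → Bool) (ha : a ∈ D) (hb : b ∈ D)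
    (hreach : (solGraph D).Reachable ⟨a, ha⟩ ⟨b, hb⟩) :
    (solGraph D).dist ⟨a, ha⟩ ⟨b, hb⟩ = hammingDist a b ∧
    ∃ p : (solGraph D).Walk ⟨a, ha⟩ ⟨b, hb⟩,
      p.length = hammingDist a b ∧
      ∀ u ∈ p.support, ∀ i : Fin n, a i = b i → (u : Fin n → Bool) i = a i := by
  obtain ⟨p, hplen, hpint⟩ := key hmaj (hammingDist a b) a b ha hb rfl hreach
  refine ⟨?_, p, hplen, hpint⟩
  apply le_antisymm
  · rw [← hplen]
    exact SimpleGraph.dist_le p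
  · obtain ⟨q, hq⟩ := hreach.exists_walk_length_eq_dist
    rw [← hq]
    exact hamming_le_walk_length q
end

section
/- Every logical relation R ⊆ {0,1}^k of arity k ≥ 1 is faithfully expressible from S_3, the set of 3-clause relations. -/
open SimpleGraph

namespace S3Expr

def chainOK (t : ℕ) (l : Fin (t+3) → Bool) (z : Fin t → Bool) : Prop :=
  ∀ i : Fin (t+1),
    ((if h : (i:ℕ) = 0 then l ⟨0, by omega⟩ else !z ⟨(i:ℕ)-1, by have := i.isLt; omega⟩)
     || l ⟨(i:ℕ)+1, by have := i.isLt; omega⟩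
     || (if h : (i:ℕ) < t then z ⟨(i:ℕ), h⟩ else l ⟨(i:ℕ)+2, by have := i.isLt; omega⟩)) = true

def zmin (t : ℕ) (l l' : Fin (t+3) → Bool) (i : Fin t) : Bool :=
  decide (∀ j : Fin (t+3), (j:ℕ) ≤ (i:ℕ)+1 → (l j && l' j) = false)

lemma zmin_comm (t : ℕ) (l l' : Fin (t+3) → Bool) : zmin t l l' = zmin t l' l := by
  funext i; simp [zmin, Bool.and_comm]

lemma chain_unsat {t : ℕ} {l : Fin (t+3) → Bool} {z : Fin t → Bool}
    (hl : ∀ j, l j = false) (h : chainOK t l z) : False := by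
  have key : ∀ p (hp : p < t), z ⟨p, hp⟩ = true := by
    intro p
    induction p with
    | zero =>
      intro hp
      have h0 := h ⟨0, by omega⟩
      simp only [dif_pos rfl, hl, Bool.false_or] at h0
      rw [dif_pos hp] at h0
      simpa [hl] using h0
    | succ p ih =>
      intro hp
      have hi := h ⟨p+1, by omega⟩
      have hne : ¬((p+1 : ℕ) = 0) := by omega
      rw [dif_neg hne] at hi
      have : z ⟨p+1-1, by omega⟩ = true := by
        have := ih (by omega)
        convert this using 2; simp
      rw [this] at hi
      simp only [hl, Bool.not_true, Bool.false_or] at hi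
      rw [dif_pos hp] at hi
      exact hi
  -- final clause i = t
  have hfin := h ⟨t, by omega⟩
  rw [dif_neg (by omega : ¬ (t < t))] at hfin
  simp only [hl, Bool.or_false] at hfin
  by_cases ht : t = 0
  · subst ht
    rw [dif_pos rfl] at hfin
    simp [hl] at hfin
  · rw [dif_neg ht] at hfin
    rw [key (t-1) (by omega)] at hfin
    simp at hfin

lemma chain_min_valid {t : ℕ} {l l' : Fin (t+3) → Bool}
    (hl : ∃ j, l j = true) (hl' : ∃ j, l' j = true)
    (q : Fin (t+3)) (hq : ∀ j, j ≠ q → l j = l' j) :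
    chainOK t l (zmin t l l') := by
  intro i
  simp only [Bool.or_eq_true]
  by_cases hi0 : (i:ℕ) = 0
  · rw [dif_pos hi0]
    by_cases h0 : l ⟨0, by omega⟩ = true
    · exact Or.inl (Or.inl h0)
    by_cases h1 : l ⟨0+1, by omega⟩ = true
    · refine Or.inl (Or.inr ?_); convert h1 using 3; omega
    refine Or.inr ?_
    by_cases hit : (i:ℕ) < t
    · rw [dif_pos hit]
      simp only [zmin, decide_eq_true_eq]
      intro j hj
      have : j = ⟨0, by omega⟩ ∨ j = ⟨1, by omega⟩ := by
        rcases Nat.le_one_iff_eq_zero_or_eq_one.mp (by omega : (j:ℕ) ≤ 1) with h | h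
        · exact Or.inl (Fin.ext h)
        · exact Or.inr (Fin.ext h)
      have h0' : l ⟨0, by omega⟩ = false := Bool.eq_false_iff.mpr h0
      have h1' : l ⟨1, by omega⟩ = false := Bool.eq_false_iff.mpr h1
      rcases this with h | h
      · rw [h, h0']; rfl
      · rw [h, h1']; rfl
    · rw [dif_neg hit]
      -- t = 0 here? no: ¬ (i < t) and i = 0 means t = 0
      have ht : t = 0 := by omega
      obtain ⟨j0, hj0⟩ := hl
      have hj0' : (j0:ℕ) = 2 := by
        have h3 := j0.isLt
        have c0 : (j0:ℕ) ≠ 0 := by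
          intro hc
          exact h0 (by rw [show (⟨0, by omega⟩ : Fin (t+3)) = j0 from Fin.ext (by simp only [Fin.val_mk]; omega)]; exact hj0)
        have c1 : (j0:ℕ) ≠ 1 := by
          intro hc
          exact h1 (by rw [show (⟨0+1, by omega⟩ : Fin (t+3)) = j0 from Fin.ext (by simp only [Fin.val_mk]; omega)]; exact hj0)
        omega
      rw [show (⟨(i:ℕ)+2, by have := i.isLt; omega⟩ : Fin (t+3)) = j0 from Fin.ext (by simp only [Fin.val_mk]; omega)]
      exact hj0
  · rw [dif_neg hi0]
    by_cases hz : zmin t l l' ⟨(i:ℕ)-1, by have := i.isLt; omega⟩ = true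
    swap
    · exact Or.inl (Or.inl (by simp [Bool.eq_false_iff.mpr hz]))
    have hzp : ∀ j : Fin (t+3), (j:ℕ) ≤ (i:ℕ) → (l j && l' j) = false := by
      intro j hj
      have := of_decide_eq_true hz
      exact this j (by simpa using by omega : (j:ℕ) ≤ ((i:ℕ)-1)+1)
    by_cases hB : l ⟨(i:ℕ)+1, by have := i.isLt; omega⟩ = true
    · exact Or.inl (Or.inr hB)
    refine Or.inr ?_
    by_cases hit : (i:ℕ) < t
    · rw [dif_pos hit]
      simp only [zmin, decide_eq_true_eq]
      intro j hj
      rcases Nat.lt_or_ge (j:ℕ) ((i:ℕ)+1) with h | h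
      · exact hzp j (by omega)
      · have : j = ⟨(i:ℕ)+1, by have := i.isLt; omega⟩ := Fin.ext (by simp only [Fin.val_mk]; omega)
        rw [this, Bool.eq_false_iff.mpr hB]
        simp
    · rw [dif_neg hit]
      have hit' : (i:ℕ) = t := by have := i.isLt; omega
      obtain ⟨j0, hj0⟩ := hl
      by_cases hjt : (j0:ℕ) ≤ (i:ℕ)
      · -- l' j0 = false, so j0 = q
        have hl'j0 : l' j0 = false := by
          have := hzp j0 hjt
          rw [hj0] at this; simpa using this
        have hq0 : j0 = q := by
          by_contra hne
          rw [hq j0 hne] at hj0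
          rw [hj0] at hl'j0; exact absurd hl'j0 (by simp)
        obtain ⟨j1, hj1⟩ := hl'
        have hjq : j1 ≠ q := by
          intro hc
          rw [hc, ← hq0, hl'j0] at hj1; exact absurd hj1 (by simp)
        have hlj1 : l j1 = true := by rw [hq j1 hjq]; exact hj1
        have hj1t : ¬ ((j1:ℕ) ≤ (i:ℕ)) := by
          intro hc
          have := hzp j1 hc
          rw [hlj1, hj1] at this; simp at this
        have hj1ne : (j1:ℕ) ≠ (i:ℕ)+1 := by
          intro hc
          exact hB (by rw [show (⟨(i:ℕ)+1, by have := i.isLt; omega⟩ : Fin (t+3)) = j1 from Fin.ext (by simp only [Fin.val_mk]; omega)]; exact hlj1)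
        have : (j1:ℕ) = (i:ℕ)+2 := by have := j1.isLt; omega
        rw [show (⟨(i:ℕ)+2, by have := i.isLt; omega⟩ : Fin (t+3)) = j1 from Fin.ext (by simp only [Fin.val_mk]; omega)]
        exact hlj1
      · have hj0ne : (j0:ℕ) ≠ (i:ℕ)+1 := by
          intro hc
          exact hB (by rw [show (⟨(i:ℕ)+1, by have := i.isLt; omega⟩ : Fin (t+3)) = j0 from Fin.ext (by simp only [Fin.val_mk]; omega)]; exact hj0)
        have : (j0:ℕ) = (i:ℕ)+2 := by have := j0.isLt; omega
        rw [show (⟨(i:ℕ)+2, by have := i.isLt; omega⟩ : Fin (t+3)) = j0 from Fin.ext (by simp only [Fin.val_mk]; omega)]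
        exact hj0

lemma chain_ge_min {t : ℕ} {l : Fin (t+3) → Bool} {z : Fin t → Bool}
    (h : chainOK t l z) : ∀ i : Fin t, zmin t l l i = true → z i = true := by
  have key : ∀ p (hp : p < t), zmin t l l ⟨p, hp⟩ = true → z ⟨p, hp⟩ = true := by
    intro p
    induction p with
    | zero =>
      intro hp hz
      have hz' := of_decide_eq_true hz
      have h0 := h ⟨0, by omega⟩
      rw [dif_pos rfl, dif_pos hp] at h0
      have e0 : l ⟨0, by omega⟩ = false := by
        have := hz' ⟨0, by omega⟩ (by simp)
        simpa using this
      have e1 : l ⟨0+1, by omega⟩ = false := by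
        have := hz' ⟨1, by omega⟩ (by simp)
        simpa using this
      rw [e0, e1] at h0
      simpa using h0
    | succ p ih =>
      intro hp hz
      have hz' := of_decide_eq_true hz
      have hzp : zmin t l l ⟨p, by omega⟩ = true := by
        apply decide_eq_true
        intro j hj
        exact hz' j (by simp only [Fin.val_mk] at hj ⊢; omega)
      have hzpz := ih (by omega) hzp
      have hi := h ⟨p+1, by omega⟩
      rw [dif_neg (by simp : ¬ ((p+1:ℕ) = 0)), dif_pos (by simpa using hp)] at hi
      have : z ⟨p+1-1, by omega⟩ = true := by convert hzpz using 2; simp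
      rw [this] at hi
      have e2 : l ⟨p+1+1, by omega⟩ = false := by
        have := hz' ⟨p+2, by omega⟩ (by simp)
        simpa using this
      rw [e2] at hi
      simpa using hi
  intro i hz
  have := key (i:ℕ) i.isLt (by convert hz using 2)
  convert this using 2

lemma chain_descent {t : ℕ} {l : Fin (t+3) → Bool} {z : Fin t → Bool}
    (h : chainOK t l z) (i₀ : Fin t)
    (hz0 : zmin t l l i₀ = false)
    (hbelow : ∀ i : Fin t, (i:ℕ) < (i₀:ℕ) → z i = zmin t l l i) :
    chainOK t l (Function.update z i₀ false) := by
  intro i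
  simp only [Bool.or_eq_true]
  by_cases hA : (i:ℕ) = (i₀:ℕ)+1
  · -- A slot becomes !false = true
    refine Or.inl (Or.inl ?_)
    rw [dif_neg (by omega : ¬ ((i:ℕ) = 0))]
    have : (⟨(i:ℕ)-1, by have := i.isLt; omega⟩ : Fin t) = i₀ := Fin.ext (by simp only [Fin.val_mk]; omega)
    rw [this, Function.update_self]
    rfl
  by_cases hC : (i:ℕ) = (i₀:ℕ)
  · -- the clause whose C slot is z i₀, now false
    have hit : (i:ℕ) < t := by rw [hC]; exact i₀.isLt
    by_cases hi0 : (i:ℕ) = 0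
    · -- need l 0 ∨ l 1 from hz0
      rw [dif_pos hi0]
      have hz0' : ¬ (∀ j : Fin (t+3), (j:ℕ) ≤ (i₀:ℕ)+1 → (l j && l j) = false) :=
        of_decide_eq_false hz0
      push_neg at hz0'
      obtain ⟨j, hj, hjt⟩ := hz0'
      have hjv : (j:ℕ) = 0 ∨ (j:ℕ) = 1 := by omega
      have hlj : l j = true := by
        rcases Bool.eq_false_or_eq_true (l j) with ht | hf
        · exact ht
        · rw [hf] at hjt; simp at hjt
      rcases hjv with hv | hv
      · exact Or.inl (Or.inl (by rw [show (⟨0, by omega⟩ : Fin (t+3)) = j from Fin.ext (by simp only [Fin.val_mk]; omega)]; exact hlj))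
      · exact Or.inl (Or.inr (by rw [show (⟨(i:ℕ)+1, by have := i.isLt; omega⟩ : Fin (t+3)) = j from Fin.ext (by simp only [Fin.val_mk]; omega)]; exact hlj))
    · -- i₀ > 0 : use hbelow at i-1 and hz0
      rw [dif_neg hi0]
      set jm : Fin t := ⟨(i:ℕ)-1, by have := i.isLt; omega⟩ with hjm
      have hne : jm ≠ i₀ := by
        intro hc
        have := congrArg Fin.val hc
        simp only [hjm, Fin.val_mk] at this; omega
      rw [Function.update_of_ne hne]
      rcases Bool.eq_false_or_eq_true (z jm) with htr | hf
      swap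
      · exact Or.inl (Or.inl (by rw [hf]; rfl))
      -- z (i-1) = true hence zmin (i-1) = true
      have hminm : zmin t l l jm = true := by
        rw [← hbelow jm (by simp only [hjm, Fin.val_mk]; omega)]; exact htr
      have hm' := of_decide_eq_true hminm
      rcases Bool.eq_false_or_eq_true (l ⟨(i:ℕ)+1, by have := i.isLt; omega⟩) with hBt | hBf
      · exact Or.inl (Or.inr hBt)
      -- contradiction with hz0
      exfalso
      have : zmin t l l i₀ = true := by
        apply decide_eq_true
        intro j hj
        rcases Nat.lt_or_ge (j:ℕ) ((i₀:ℕ)+1) with hlt | hge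
        · exact hm' j (by simp only [hjm, Fin.val_mk]; omega)
        · have : j = (⟨(i:ℕ)+1, by have := i.isLt; omega⟩ : Fin (t+3)) := Fin.ext (by simp only [Fin.val_mk]; omega)
          rw [this, hBf]; rfl
      rw [this] at hz0; exact absurd hz0 (by simp)
  · -- clause untouched
    have hi := h i
    simp only [Bool.or_eq_true] at hi
    by_cases hi0 : (i:ℕ) = 0
    · rw [dif_pos hi0] at hi ⊢
      by_cases hit : (i:ℕ) < t
      · rw [dif_pos hit] at hi; simp only [dif_pos hit]
        rw [Function.update_of_ne (by intro hc; have := congrArg Fin.val hc; simp only [Fin.val_mk] at this; omega)]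
        exact hi
      · rw [dif_neg hit] at hi; simp only [dif_neg hit]; exact hi
    · rw [dif_neg hi0] at hi ⊢
      rw [Function.update_of_ne (by intro hc; have := congrArg Fin.val hc; simp only [Fin.val_mk] at this; omega : (⟨(i:ℕ)-1, by have := i.isLt; omega⟩ : Fin t) ≠ i₀)]
      by_cases hit : (i:ℕ) < t
      · rw [dif_pos hit] at hi; simp only [dif_pos hit]
        rw [Function.update_of_ne (by intro hc; have := congrArg Fin.val hc; simp only [Fin.val_mk] at this; omega)]
        exact hi
      · rw [dif_neg hit] at hi; simp only [dif_neg hit]; exact hi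

abbrev Lit (V : Type*) := (V ⊕ Bool) × Bool

def litVal {V : Type*} (x : V → Bool) (p : Lit V) : Bool :=
  xor (Sum.elim x id p.1) (!p.2)

def clause3 {V : Type*} (p q r : Lit V) : BClause V :=
  match p.2, q.2, r.2 with
  | true,  true,  true  => ⟨3, Dclause 0, ![p.1, q.1, r.1]⟩
  | false, true,  true  => ⟨3, Dclause 1, ![p.1, q.1, r.1]⟩
  | true,  false, true  => ⟨3, Dclause 1, ![q.1, p.1, r.1]⟩
  | true,  true,  false => ⟨3, Dclause 1, ![r.1, p.1, q.1]⟩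
  | false, false, true  => ⟨3, Dclause 2, ![p.1, q.1, r.1]⟩
  | false, true,  false => ⟨3, Dclause 2, ![p.1, r.1, q.1]⟩
  | true,  false, false => ⟨3, Dclause 2, ![q.1, r.1, p.1]⟩
  | false, false, false => ⟨3, Dclause 3, ![p.1, q.1, r.1]⟩

lemma clause3_over {V : Type*} (p q r : Lit V) :
    (⟨(clause3 p q r).arity, (clause3 p q r).rel⟩ : BRel) ∈ S3 := by
  obtain ⟨pa, _ | _⟩ := p <;> obtain ⟨qa, _ | _⟩ := q <;> obtain ⟨ra, _ | _⟩ := r <;>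
    simp only [clause3] <;> simp only [S3] <;> tauto

lemma mem_Dclause_iff (i : ℕ) (f : Fin 3 → Bool) :
    f ∈ Dclause i ↔
      ((if (0:ℕ) < i then f 0 = false else f 0 = true) ∨
       (if (1:ℕ) < i then f 1 = false else f 1 = true) ∨
       (if (2:ℕ) < i then f 2 = false else f 2 = true)) := by
  constructor
  · rintro ⟨j, hj⟩
    fin_cases j
    · exact Or.inl (by simpa using hj)
    · exact Or.inr (Or.inl (by simpa using hj))
    · exact Or.inr (Or.inr (by simpa using hj))
  · rintro (h | h | h)
    · exact ⟨0, by simpa using h⟩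
    · exact ⟨1, by simpa using h⟩
    · exact ⟨2, by simpa using h⟩

lemma clause3_sat {V : Type*} (p q r : Lit V) (x : V → Bool) :
    (clause3 p q r).Sat x ↔ (litVal x p || litVal x q || litVal x r) = true := by
  obtain ⟨pa, bp⟩ := p; obtain ⟨qa, bq⟩ := q; obtain ⟨ra, br⟩ := r
  cases bp <;> cases bq <;> cases br <;>
  · simp only [BClause.Sat, clause3, litVal]
    erw [mem_Dclause_iff]
    cases hp : Sum.elim x id pa <;> cases hq : Sum.elim x id qa <;> cases hr : Sum.elim x id ra <;>
      simp [hp, hq, hr, Matrix.cons_val_zero, Matrix.cons_val_one]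



section Construction

variable {t m : ℕ} {U : Type} [Fintype U]

/-- literal value at position j of the clause forbidding u -/
def lit (t : ℕ) (a u : Fin (t+1) → Bool) (j : Fin (t+3)) : Bool :=
  if h : (j:ℕ) < t+1 then xor (a ⟨(j:ℕ), h⟩) (u ⟨(j:ℕ), h⟩) else false

def litArg (t m : ℕ) (u : Fin (t+1) → Bool) (j : Fin (t+3)) : Lit (Fin (t+1) ⊕ Fin m) :=
  if h : (j:ℕ) < t+1 then (Sum.inl (Sum.inl ⟨(j:ℕ), h⟩), !u ⟨(j:ℕ), h⟩)
  else (Sum.inr false, true)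

def zArg (v : U → Fin (t+1) → Bool) (e : U × Fin t ≃ Fin m) (u : U) (i : Fin t) (pol : Bool) :
    Lit (Fin (t+1) ⊕ Fin m) :=
  (Sum.inl (Sum.inr (e (u, i))), pol)

def clauseFor (v : U → Fin (t+1) → Bool) (e : U × Fin t ≃ Fin m) (u : U) (i : Fin (t+1)) :
    BClause (Fin (t+1) ⊕ Fin m) :=
  clause3
    (if h : (i:ℕ) = 0 then litArg t m (v u) ⟨0, by omega⟩
      else zArg v e u ⟨(i:ℕ)-1, by have := i.isLt; omega⟩ false)
    (litArg t m (v u) ⟨(i:ℕ)+1, by have := i.isLt; omega⟩)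
    (if h : (i:ℕ) < t then zArg v e u ⟨(i:ℕ), h⟩ true
      else litArg t m (v u) ⟨(i:ℕ)+2, by have := i.isLt; omega⟩)

noncomputable def phi (v : U → Fin (t+1) → Bool) (e : U × Fin t ≃ Fin m) : BCnf (Fin (t+1) ⊕ Fin m) :=
  (Finset.univ : Finset (U × Fin (t+1))).toList.map (fun p => clauseFor v e p.1 p.2)

lemma phi_over (v : U → Fin (t+1) → Bool) (e : U × Fin t ≃ Fin m) : (phi v e).Over S3 := by
  intro C hC
  simp only [phi, List.mem_map] at hC
  obtain ⟨p, _, rfl⟩ := hC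
  exact clause3_over _ _ _

lemma litVal_litArg (a : Fin (t+1) → Bool) (y : Fin m → Bool)
    (u : Fin (t+1) → Bool) (j : Fin (t+3)) :
    litVal (Sum.elim a y) (litArg t m u j) = lit t a u j := by
  by_cases h : (j:ℕ) < t+1
  · simp [litVal, litArg, lit, dif_pos h, Bool.not_not, Nat.lt_succ_iff.mp h]
  · simp [litVal, litArg, lit, dif_neg h, (Nat.lt_succ_iff.not.mp h)]

lemma litVal_zArg (a : Fin (t+1) → Bool) (y : Fin m → Bool)
    (v : U → Fin (t+1) → Bool) (e : U × Fin t ≃ Fin m) (u : U) (i : Fin t) (pol : Bool) :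
    litVal (Sum.elim a y) (zArg v e u i pol) = (if pol then y (e (u,i)) else !(y (e (u,i)))) := by
  cases pol <;> simp [litVal, zArg]

lemma phi_sat_iff (v : U → Fin (t+1) → Bool) (e : U × Fin t ≃ Fin m)
    (a : Fin (t+1) → Bool) (y : Fin m → Bool) :
    (phi v e).Sat (Sum.elim a y) ↔
      ∀ u : U, chainOK t (lit t a (v u)) (fun i => y (e (u, i))) := by
  constructor
  · intro hs u i
    have hc := hs (clauseFor v e u i) (by
      simp only [phi, List.mem_map]
      exact ⟨(u, i), by simp, rfl⟩)
    rw [clauseFor, clause3_sat] at hc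
    rw [litVal_litArg] at hc
    by_cases hi0 : (i:ℕ) = 0
    · rw [dif_pos hi0] at hc ⊢
      rw [litVal_litArg] at hc
      by_cases hit : (i:ℕ) < t
      · rw [dif_pos hit] at hc ⊢
        rw [litVal_zArg, if_pos rfl] at hc
        exact hc
      · rw [dif_neg hit] at hc ⊢
        rw [litVal_litArg] at hc
        exact hc
    · rw [dif_neg hi0] at hc ⊢
      rw [litVal_zArg, if_neg (by simp)] at hc
      by_cases hit : (i:ℕ) < t
      · rw [dif_pos hit] at hc ⊢
        rw [litVal_zArg, if_pos rfl] at hc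
        exact hc
      · rw [dif_neg hit] at hc ⊢
        rw [litVal_litArg] at hc
        exact hc
  · intro h C hC
    simp only [phi, List.mem_map] at hC
    obtain ⟨⟨u, i⟩, _, rfl⟩ := hC
    have hc := h u i
    rw [clauseFor, clause3_sat, litVal_litArg]
    by_cases hi0 : (i:ℕ) = 0
    · rw [dif_pos hi0] at hc ⊢
      rw [litVal_litArg]
      by_cases hit : (i:ℕ) < t
      · rw [dif_pos hit] at hc ⊢
        rw [litVal_zArg, if_pos rfl]
        exact hc
      · rw [dif_neg hit] at hc ⊢
        rw [litVal_litArg]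
        exact hc
    · rw [dif_neg hi0] at hc ⊢
      rw [litVal_zArg, if_neg (by simp)]
      by_cases hit : (i:ℕ) < t
      · rw [dif_pos hit] at hc ⊢
        rw [litVal_zArg, if_pos rfl]
        exact hc
      · rw [dif_neg hit] at hc ⊢
        rw [litVal_litArg]
        exact hc

end Construction

lemma hamming_one_iff {n : Type*} [Fintype n] [DecidableEq n] {β : Type*} [DecidableEq β]
    (x y : n → β) :
    hammingDist x y = 1 ↔ ∃ q, x q ≠ y q ∧ ∀ j, j ≠ q → x j = y j := by
  rw [hammingDist, Finset.card_eq_one]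
  constructor
  · rintro ⟨q, hq⟩
    refine ⟨q, ?_, ?_⟩
    · have : q ∈ Finset.univ.filter fun i => x i ≠ y i := hq ▸ Finset.mem_singleton_self q
      simpa using this
    · intro j hj
      by_contra hne
      have : j ∈ Finset.univ.filter fun i => x i ≠ y i := by simpa using hne
      rw [hq, Finset.mem_singleton] at this
      exact hj this
  · rintro ⟨q, hq, hrest⟩
    refine ⟨q, ?_⟩
    ext j
    simp only [Finset.mem_filter, Finset.mem_univ, true_and, Finset.mem_singleton]
    constructor
    · intro hne; by_contra hj; exact hne (hrest j hj)
    · rintro rfl; exact hq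

lemma ham_update_one {n : Type*} [Fintype n] [DecidableEq n] {β : Type*} [DecidableEq β]
    (x : n → β) (q : n) (b : β) (h : x q ≠ b) :
    hammingDist x (Function.update x q b) = 1 := by
  rw [hamming_one_iff]
  refine ⟨q, by rwa [Function.update_self], fun j hj => by rw [Function.update_of_ne hj]⟩

lemma ham_update_lt {n : Type*} [Fintype n] [DecidableEq n] {β : Type*} [DecidableEq β]
    (x z : n → β) (q : n) (h : x q ≠ z q) :
    hammingDist (Function.update x q (z q)) z < hammingDist x z := by
  rw [hammingDist, hammingDist]
  apply Finset.card_lt_card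
  rw [Finset.ssubset_def]
  constructor
  · intro j hj
    simp only [Finset.mem_filter, Finset.mem_univ, true_and] at hj ⊢
    by_cases hjq : j = q
    · subst hjq; rw [Function.update_self] at hj; exact absurd rfl hj
    · rwa [Function.update_of_ne hjq] at hj
  · intro hsub
    have hq : q ∈ Finset.univ.filter fun i => x i ≠ z i := by simpa using h
    have := hsub hq
    simp only [Finset.mem_filter, Finset.mem_univ, true_and, Function.update_self] at this
    exact this rfl


end S3Expr

open S3Expr

/-- Every logical relation of arity `k ≥ 1` is faithfully expressible from
`S₃`, the set of 3-clause relations. -/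
theorem every_relation_expressible_from_S3 {k : ℕ} (hk : 1 ≤ k)
    (R : Set (Fin k → Bool)) (hR : R.Nonempty) :
    FaithfullyExpressible S3 R := by
  obtain ⟨t, rfl⟩ : ∃ t, k = t + 1 := ⟨k - 1, by omega⟩
  classical
  let U := {u : Fin (t+1) → Bool // u ∉ R}
  haveI : Fintype U := Fintype.ofFinite _
  set m : ℕ := Fintype.card (U × Fin t) with hm
  set e : U × Fin t ≃ Fin m := Fintype.equivFin (U × Fin t) with he
  set v : U → (Fin (t+1) → Bool) := Subtype.val with hv
  -- existence of a true literal in each chain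
  have hlit : ∀ (a : Fin (t+1) → Bool), a ∈ R → ∀ u : U, ∃ j, lit t a u.1 j = true := by
    intro a ha u
    have hne : a ≠ u.1 := fun hc => u.2 (hc ▸ ha)
    obtain ⟨j0, hj0⟩ := Function.ne_iff.mp hne
    refine ⟨⟨(j0:ℕ), by have := j0.isLt; omega⟩, ?_⟩
    simp only [lit]
    rw [dif_pos (show ((⟨(j0:ℕ), by have := j0.isLt; omega⟩ : Fin (t+3)):ℕ) < t+1 from
      by simp only [Fin.val_mk]; exact j0.isLt)]
    have hj : (⟨((⟨(j0:ℕ), by have := j0.isLt; omega⟩ : Fin (t+3)):ℕ), by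
        simp only [Fin.val_mk]; exact j0.isLt⟩ : Fin (t+1)) = j0 := Fin.ext (by simp)
    rw [hj]
    revert hj0
    cases a j0 <;> cases u.1 j0 <;> simp
  -- canonical minimum witness for a
  have yminSat : ∀ (a : Fin (t+1) → Bool), a ∈ R →
      (phi v e).Sat (Sum.elim a (fun jm =>
        zmin t (lit t a (v (e.symm jm).1)) (lit t a (v (e.symm jm).1)) (e.symm jm).2)) := by
    intro a ha
    rw [phi_sat_iff]
    intro u
    have heq : (fun i => (fun jm =>
        zmin t (lit t a (v (e.symm jm).1)) (lit t a (v (e.symm jm).1)) (e.symm jm).2) (e (u,i)))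
        = zmin t (lit t a (v u)) (lit t a (v u)) := by
      funext i; simp only [Equiv.symm_apply_apply]
    rw [heq]
    exact chain_min_valid (hlit a ha u) (hlit a ha u) ⟨0, by omega⟩ (fun j _ => rfl)
  refine ⟨m, phi v e, phi_over v e, ?_, ?_, ?_⟩
  · -- condition (1)
    intro a
    constructor
    · intro ha
      exact ⟨_, yminSat a ha⟩
    · rintro ⟨y, hy⟩
      by_contra ha
      rw [phi_sat_iff] at hy
      have hchain := hy ⟨a, ha⟩
      refine chain_unsat ?_ hchain
      intro j
      simp only [lit]
      split
      · simp [hv]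
      · rfl
  · -- condition (2): connectivity
    intro a ha
    set D : Set (Fin m → Bool) := {y | (phi v e).Sat (Sum.elim a y)} with hD
    set ymin : Fin m → Bool := fun jm =>
      zmin t (lit t a (v (e.symm jm).1)) (lit t a (v (e.symm jm).1)) (e.symm jm).2 with hymin
    have hyminD : ymin ∈ D := yminSat a ha
    have hzmin_eq : ∀ (u : U) (i : Fin t),
        ymin (e (u,i)) = zmin t (lit t a (v u)) (lit t a (v u)) i := by
      intro u i; simp only [hymin, Equiv.symm_apply_apply]
    have hge : ∀ y, y ∈ D → ∀ jm, ymin jm = true → y jm = true := by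
      intro y hy jm hmin
      rw [hD, Set.mem_setOf_eq, phi_sat_iff] at hy
      have h1 : e ((e.symm jm).1, (e.symm jm).2) = jm := e.apply_symm_apply jm
      have h2 := chain_ge_min (hy (e.symm jm).1) (e.symm jm).2
        (by rw [← hzmin_eq, h1]; exact hmin)
      rw [h1] at h2
      exact h2
    have step : ∀ y, y ∈ D → y ≠ ymin →
        ∃ y', y' ∈ D ∧ hammingDist y y' = 1 ∧ hammingDist y' ymin < hammingDist y ymin := by
      intro y hyD hne
      obtain ⟨jm, hjm⟩ := Function.ne_iff.mp hne
      set u : U := (e.symm jm).1 with hu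
      set Sd : Finset (Fin t) :=
        Finset.univ.filter (fun i => y (e (u,i)) ≠ ymin (e (u,i))) with hSd
      have hSdne : Sd.Nonempty := by
        refine ⟨(e.symm jm).2, ?_⟩
        simp only [hSd, Finset.mem_filter, Finset.mem_univ, true_and]
        rw [show e (u, (e.symm jm).2) = jm from e.apply_symm_apply jm]
        exact hjm
      set i₀ : Fin t := Sd.min' hSdne with hi₀
      have hi₀mem : i₀ ∈ Sd := Sd.min'_mem hSdne
      set c : Fin m := e (u, i₀) with hc
      have hdiff : y c ≠ ymin c := by
        have := hi₀mem
        simp only [hSd, Finset.mem_filter, Finset.mem_univ, true_and] at this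
        exact this
      have hyminc : ymin c = false := by
        rcases Bool.eq_false_or_eq_true (ymin c) with htr | hf
        · exact absurd (hge y hyD c htr) (fun hyc => hdiff (hyc.trans htr.symm))
        · exact hf
      have hyc : y c = true := by
        rcases Bool.eq_false_or_eq_true (y c) with htr | hf
        · exact htr
        · exact absurd (hf.trans hyminc.symm) hdiff
      refine ⟨Function.update y c false, ?_, ?_, ?_⟩
      · rw [hD, Set.mem_setOf_eq, phi_sat_iff]
        rw [hD, Set.mem_setOf_eq, phi_sat_iff] at hyD
        intro u'
        by_cases huu : u' = u
        · subst huu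
          have heq : (fun i => Function.update y c false (e (u, i)))
              = Function.update (fun i => y (e (u, i))) i₀ false := by
            funext i
            by_cases hii : i = i₀
            · subst hii
              rw [← hc, Function.update_self, Function.update_self]
            · rw [Function.update_of_ne (show e (u, i) ≠ c by
                rw [hc]
                intro hcon
                exact hii (congrArg Prod.snd (e.injective hcon))),
                Function.update_of_ne hii]
          rw [heq]
          apply chain_descent (hyD u) i₀
          · rw [← hzmin_eq, ← hc]; exact hyminc
          · intro i hilt
            have hns : i ∉ Sd := by
              intro hmem
              have hle := Sd.min'_le i hmem
              rw [← hi₀] at hle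
              have : (i₀:ℕ) ≤ (i:ℕ) := hle
              omega
            simp only [hSd, Finset.mem_filter, Finset.mem_univ, true_and, not_not] at hns
            show y (e (u, i)) = _
            rw [hns, hzmin_eq]
        · have heq : (fun i => Function.update y c false (e (u', i)))
              = fun i => y (e (u', i)) := by
            funext i
            rw [Function.update_of_ne (show e (u', i) ≠ c by
              rw [hc]
              intro hcon
              exact huu (congrArg Prod.fst (e.injective hcon)))]
          rw [heq]
          exact hyD u'
      · exact ham_update_one y c false (by rw [hyc]; simp)
      · have hfe : Function.update y c false = Function.update y c (ymin c) := by
          rw [hyminc]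
        rw [hfe]
        exact ham_update_lt y ymin c hdiff
    have reach : ∀ (n : ℕ) (y : Fin m → Bool) (hy : y ∈ D), hammingDist y ymin ≤ n →
        (solGraph D).Reachable ⟨y, hy⟩ ⟨ymin, hyminD⟩ := by
      intro n
      induction n with
      | zero =>
        intro y hy h0
        have heq : y = ymin := hammingDist_eq_zero.mp (Nat.le_zero.mp h0)
        subst heq
        exact SimpleGraph.Reachable.refl _
      | succ n ih =>
        intro y hy hle
        by_cases hEq : y = ymin
        · subst hEq
          exact SimpleGraph.Reachable.refl _
        · obtain ⟨y', hy'D, hadj, hlt⟩ := step y hy hEq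
          have hAdj : (solGraph D).Adj ⟨y, hy⟩ ⟨y', hy'D⟩ := hadj
          exact hAdj.reachable.trans (ih y' hy'D (by omega))
    haveI : Nonempty D := ⟨⟨ymin, hyminD⟩⟩
    refine ⟨?_⟩
    intro y1 y2
    obtain ⟨y1, h1⟩ := y1
    obtain ⟨y2, h2⟩ := y2
    exact (reach _ y1 h1 le_rfl).trans (reach _ y2 h2 le_rfl).symm
  · -- condition (3): common witness
    intro a b ha hb hdist
    obtain ⟨q0, hq0ne, hq0⟩ := (hamming_one_iff a b).mp hdist
    have hagree : ∀ u : U, ∀ j : Fin (t+3), j ≠ ⟨(q0:ℕ), by have := q0.isLt; omega⟩ →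
        lit t a u.1 j = lit t b u.1 j := by
      intro u j hj
      simp only [lit]
      by_cases h : (j:ℕ) < t+1
      · rw [dif_pos h, dif_pos h]
        have : (⟨(j:ℕ), h⟩ : Fin (t+1)) ≠ q0 := by
          intro hc
          exact hj (Fin.ext (by simpa using congrArg Fin.val hc))
        rw [hq0 _ this]
      · rw [dif_neg h, dif_neg h]
    refine ⟨fun jm => zmin t (lit t a (v (e.symm jm).1)) (lit t b (v (e.symm jm).1)) (e.symm jm).2,
      ?_, ?_⟩
    · rw [phi_sat_iff]
      intro u
      have heq : (fun i => (fun jm =>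
          zmin t (lit t a (v (e.symm jm).1)) (lit t b (v (e.symm jm).1)) (e.symm jm).2) (e (u,i)))
          = zmin t (lit t a (v u)) (lit t b (v u)) := by
        funext i; simp only [Equiv.symm_apply_apply]
      rw [heq]
      exact chain_min_valid (hlit a ha u) (hlit b hb u) _ (hagree u)
    · rw [phi_sat_iff]
      intro u
      have heq : (fun i => (fun jm =>
          zmin t (lit t a (v (e.symm jm).1)) (lit t b (v (e.symm jm).1)) (e.symm jm).2) (e (u,i)))
          = zmin t (lit t b (v u)) (lit t a (v u)) := by
        funext i; simp only [Equiv.symm_apply_apply]; rw [zmin_comm]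
      rw [heq]
      exact chain_min_valid (hlit b hb u) (hlit a ha u) ⟨(q0:ℕ), by have := q0.isLt; omega⟩
        (fun j hj => (hagree u j hj).symm)
end

section
/- Let ψ be a satisfiable 2-CNF formula over variables x_1,...,x_m in which every clause is a disjunction of two literals on two distinct variables, and suppose no variable is forced: for each variable x_i and each value v ∈ {0,1} there is a solution of ψ assigning v to x_i. Define the implication graph of ψ: its vertices are the 2m literals x_1,...,x_m, ¬x_1,...,¬x_m, with a directed edge from literal l_1 to literal l_2 iff ψ contains a clause consisting of l_2 and the negation of l_1. Then the solution graph G(ψ) is disconnected if and only if the implication graph contains a directed cycle. -/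
open SimpleGraph

/-- A literal over `m` variables: a variable together with its sign
(`true` = positive literal). -/
abbrev Lit (m : ℕ) := Fin m × Bool

/-- The negation of a literal. -/
def Lit.neg {m : ℕ} (l : Lit m) : Lit m := (l.1, !l.2)

/-- The literal `l` is satisfied by the assignment `x`. -/
def litSat {m : ℕ} (x : Fin m → Bool) (l : Lit m) : Prop := x l.1 = l.2

/-- A 2-CNF formula: a list of clauses, each a disjunction of two literals. -/
abbrev TwoCnf (m : ℕ) := List (Lit m × Lit m)

/-- `x` satisfies every clause of `ψ`. -/
def TwoCnf.Sat {m : ℕ} (ψ : TwoCnf m) (x : Fin m → Bool) : Prop :=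
  ∀ C ∈ ψ, litSat x C.1 ∨ litSat x C.2

/-- The implication graph of `ψ`: a directed edge from `l₁` to `l₂` iff `ψ` contains a
clause consisting of `l₂` and the negation of `l₁`. -/
def impEdge {m : ℕ} (ψ : TwoCnf m) (l₁ l₂ : Lit m) : Prop :=
  ∃ C ∈ ψ, C = (Lit.neg l₁, l₂) ∨ C = (l₂, Lit.neg l₁)

section TwoCnfProof

variable {m : ℕ}

private lemma bool_ne_helper {p q : Bool} (h : p ≠ q) : p = !q := by
  cases p <;> cases q <;> simp_all

private lemma bool_ne_helper' {p q : Bool} (h : p = q) : p ≠ !q := by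
  cases p <;> cases q <;> simp_all

private lemma bool_resolve {p q r : Bool} (h1 : p ≠ q) (h2 : q ≠ r) : p = r := by
  cases p <;> cases q <;> cases r <;> simp_all

private lemma impEdge_sat {ψ : TwoCnf m} {x : Fin m → Bool} (hx : ψ.Sat x)
    {l₁ l₂ : Lit m} (h : impEdge ψ l₁ l₂) (h1 : litSat x l₁) : litSat x l₂ := by
  obtain ⟨C, hC, hCe⟩ := h
  have hs := hx C hC
  have hneg : ¬ litSat x (Lit.neg l₁) := by
    simp only [litSat, Lit.neg] at h1 ⊢
    exact bool_ne_helper' h1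
  rcases hCe with rfl | rfl
  · exact hs.resolve_left hneg
  · exact hs.resolve_right hneg

private lemma rtg_sat {ψ : TwoCnf m} {x : Fin m → Bool} (hx : ψ.Sat x)
    {l₁ l₂ : Lit m} (h : Relation.ReflTransGen (impEdge ψ) l₁ l₂) (h1 : litSat x l₁) :
    litSat x l₂ := by
  induction h with
  | refl => exact h1
  | tail _ e ih => exact impEdge_sat hx e ih

private lemma cycle_disconnects {ψ : TwoCnf m}
    (hdistinct : ∀ C ∈ ψ, (C.1).1 ≠ (C.2).1)
    (hfree : ∀ (i : Fin m) (v : Bool), ∃ x, ψ.Sat x ∧ x i = v)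
    {l : Lit m} (hc : Relation.TransGen (impEdge ψ) l l) :
    ¬ (solGraph {x : Fin m → Bool | TwoCnf.Sat ψ x}).Connected := by
  obtain ⟨b, he, hrt⟩ := (Relation.TransGen.head'_iff).mp hc
  have hvne : l.1 ≠ b.1 := by
    obtain ⟨C, hC, hCe⟩ := he
    have hd := hdistinct C hC
    rcases hCe with rfl | rfl
    · simpa [Lit.neg] using hd
    · simpa [Lit.neg] using hd.symm
  have hiff : ∀ x, ψ.Sat x → (litSat x l ↔ litSat x b) := fun x hx =>
    ⟨fun h => impEdge_sat hx he h, fun h => rtg_sat hx hrt h⟩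
  intro hconn
  obtain ⟨x₀, hx₀, hv₀⟩ := hfree l.1 l.2
  obtain ⟨x₁, hx₁, hv₁⟩ := hfree l.1 (!l.2)
  have key : ∀ (u v : {x : Fin m → Bool | TwoCnf.Sat ψ x}),
      (solGraph {x : Fin m → Bool | TwoCnf.Sat ψ x}).Reachable u v → u.1 l.1 = v.1 l.1 := by
    intro u v hr
    obtain ⟨w⟩ := hr
    induction w with
    | nil => rfl
    | @cons u v w ha p ih =>
      have step : u.1 l.1 = v.1 l.1 := by
        by_contra hnel
        have h1 := hiff u.1 u.2
        have h2 := hiff v.1 v.2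
        simp only [litSat] at h1 h2
        have hb : u.1 b.1 ≠ v.1 b.1 := by
          intro hbe
          by_cases hv : v.1 l.1 = l.2
          · have hvb := h2.mp hv
            rw [← hbe] at hvb
            exact hnel ((h1.mpr hvb).trans hv.symm)
          · have hu : u.1 l.1 = l.2 := bool_resolve hnel hv
            have hub := h1.mp hu
            rw [hbe] at hub
            exact hv (h2.mpr hub)
        have ha' : hammingDist u.1 v.1 = 1 := ha
        have hcard : 2 ≤ hammingDist u.1 v.1 := by
          have hsub : ({l.1, b.1} : Finset (Fin m)) ⊆
              Finset.univ.filter (fun i => u.1 i ≠ v.1 i) := by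
            intro j hj
            simp only [Finset.mem_insert, Finset.mem_singleton] at hj
            rcases hj with rfl | rfl <;> simp [hnel, hb]
          have h2le : 2 ≤ (Finset.univ.filter (fun i => u.1 i ≠ v.1 i)).card := by
            rw [← Finset.card_pair hvne]
            exact Finset.card_le_card hsub
          unfold hammingDist
          exact h2le
        omega
      rw [step]; exact ih
  have := key ⟨x₀, hx₀⟩ ⟨x₁, hx₁⟩ (hconn.preconnected _ _)
  simp only at this
  rw [hv₀, hv₁] at this
  simp at this

private lemma nocycle_step {ψ : TwoCnf m}
    (hdistinct : ∀ C ∈ ψ, (C.1).1 ≠ (C.2).1)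
    (hnc : ∀ l : Lit m, ¬ Relation.TransGen (impEdge ψ) l l)
    {x y : Fin m → Bool} (hx : ψ.Sat x) (hy : ψ.Sat y) (hne : x ≠ y) :
    ∃ x', ψ.Sat x' ∧ hammingDist x x' = 1 ∧ hammingDist x' y + 1 = hammingDist x y := by
  set r := Relation.TransGen (impEdge ψ) with hrdef
  have hwf : WellFounded r := by
    have h1 : IsTrans (Lit m) r := ⟨fun a b c h1 h2 => h1.trans h2⟩
    have h2 : IsIrrefl (Lit m) r := ⟨hnc⟩
    exact Finite.wellFounded_of_trans_of_irrefl r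
  set D : Set (Lit m) := {l | litSat x l ∧ ¬ litSat y l} with hDdef
  have hDne : D.Nonempty := by
    have hj : ∃ j, x j ≠ y j := by
      by_contra h; push_neg at h; exact hne (funext h)
    obtain ⟨j, hj⟩ := hj
    exact ⟨(j, x j), rfl, fun h => hj h.symm⟩
  obtain ⟨l, hlD, hmin⟩ := hwf.has_min D hDne
  obtain ⟨hlx, hly⟩ := hlD
  have hxy : x l.1 ≠ y l.1 := by
    intro h
    exact hly (by unfold litSat; rw [← h]; exact hlx)
  set x' := Function.update x l.1 (y l.1) with hx'def
  have hx'l : x' l.1 = y l.1 := Function.update_self _ _ _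
  have hx'ne : ∀ j, j ≠ l.1 → x' j = x j := fun j hj => Function.update_of_ne hj _ _
  have hsat' : ψ.Sat x' := by
    intro C hC
    by_cases h1 : litSat x' C.1
    · exact Or.inl h1
    by_cases h2 : litSat x' C.2
    · exact Or.inr h2
    exfalso
    have hxC := hx C hC
    have hyC := hy C hC
    have heq : ∀ a : Lit m, a.1 ≠ l.1 → (litSat x' a ↔ litSat x a) := by
      intro a ha; unfold litSat; rw [hx'ne a.1 ha]
    by_cases hc1 : C.1.1 = l.1
    · have hc2 : C.2.1 ≠ l.1 := by rw [← hc1]; exact (hdistinct C hC).symm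
      have hxc2 : ¬ litSat x C.2 := fun h => h2 ((heq C.2 hc2).mpr h)
      have hxc1 : litSat x C.1 := hxC.resolve_right hxc2
      have hC1 : C.1 = l := by
        have hxl : x l.1 = C.1.2 := by rw [← hc1]; exact hxc1
        have : C.1.2 = l.2 := by rw [← hxl]; exact hlx
        exact Prod.ext hc1 this
      have hyc2 : litSat y C.2 := by
        rcases hyC with h | h
        · exact absurd h (by rw [hC1]; exact hly)
        · exact h
      have hl'D : Lit.neg C.2 ∈ D := by
        constructor
        · show x (C.2).1 = !(C.2).2
          exact bool_ne_helper hxc2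
        · show ¬ (y (C.2).1 = !(C.2).2)
          exact bool_ne_helper' hyc2
      have hedge : impEdge ψ (Lit.neg C.2) l := by
        refine ⟨C, hC, Or.inr ?_⟩
        have hnn : Lit.neg (Lit.neg C.2) = C.2 := by simp [Lit.neg]
        rw [hnn, ← hC1]
      exact hmin _ hl'D (Relation.TransGen.single hedge)
    · by_cases hc2 : C.2.1 = l.1
      · have hxc1 : ¬ litSat x C.1 := fun h => h1 ((heq C.1 hc1).mpr h)
        have hxc2 : litSat x C.2 := hxC.resolve_left hxc1
        have hC2 : C.2 = l := by
          have hxl : x l.1 = C.2.2 := by rw [← hc2]; exact hxc2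
          have : C.2.2 = l.2 := by rw [← hxl]; exact hlx
          exact Prod.ext hc2 this
        have hyc1 : litSat y C.1 := by
          rcases hyC with h | h
          · exact h
          · exact absurd h (by rw [hC2]; exact hly)
        have hl'D : Lit.neg C.1 ∈ D := by
          constructor
          · show x (C.1).1 = !(C.1).2
            exact bool_ne_helper hxc1
          · show ¬ (y (C.1).1 = !(C.1).2)
            exact bool_ne_helper' hyc1
        have hedge : impEdge ψ (Lit.neg C.1) l := by
          refine ⟨C, hC, Or.inl ?_⟩
          have hnn : Lit.neg (Lit.neg C.1) = C.1 := by simp [Lit.neg]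
          rw [hnn, ← hC2]
        exact hmin _ hl'D (Relation.TransGen.single hedge)
      · exact (hxC.resolve_left (fun h => h1 ((heq C.1 hc1).mpr h)))
          |> (fun h => h2 ((heq C.2 hc2).mpr h))
  have hmem : l.1 ∈ Finset.univ.filter (fun j => x j ≠ y j) := by
    simp [hxy]
  have hfilter1 : Finset.univ.filter (fun j => x j ≠ x' j) = {l.1} := by
    ext j
    simp only [Finset.mem_filter, Finset.mem_univ, true_and, Finset.mem_singleton]
    constructor
    · intro h; by_contra hj; exact h (hx'ne j hj).symm
    · rintro rfl; rw [hx'l]; exact hxy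
  have hd1 : hammingDist x x' = 1 := by
    unfold hammingDist
    rw [hfilter1]
    exact Finset.card_singleton _
  have hfilter2 : Finset.univ.filter (fun j => x' j ≠ y j)
      = (Finset.univ.filter (fun j => x j ≠ y j)).erase l.1 := by
    ext j
    simp only [Finset.mem_filter, Finset.mem_univ, true_and, Finset.mem_erase]
    by_cases hj : j = l.1
    · subst hj; simp [hx'l]
    · rw [hx'ne j hj]; simp [hj]
  have hd2 : hammingDist x' y + 1 = hammingDist x y := by
    unfold hammingDist
    rw [hfilter2, Finset.card_erase_of_mem hmem]
    have hpos : 0 < (Finset.univ.filter (fun j => x j ≠ y j)).card :=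
      Finset.card_pos.mpr ⟨l.1, hmem⟩
    omega
  exact ⟨x', hsat', hd1, hd2⟩

private lemma nocycle_reach {ψ : TwoCnf m}
    (hdistinct : ∀ C ∈ ψ, (C.1).1 ≠ (C.2).1)
    (hnc : ∀ l : Lit m, ¬ Relation.TransGen (impEdge ψ) l l) :
    ∀ (n : ℕ) (x y : Fin m → Bool) (hx : ψ.Sat x) (hy : ψ.Sat y),
      hammingDist x y ≤ n →
      (solGraph {x : Fin m → Bool | TwoCnf.Sat ψ x}).Reachable ⟨x, hx⟩ ⟨y, hy⟩ := by
  intro n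
  induction n with
  | zero =>
    intro x y hx hy h
    have hxy : x = y := hammingDist_eq_zero.mp (Nat.le_zero.mp h)
    subst hxy
    exact SimpleGraph.Reachable.refl _
  | succ n ih =>
    intro x y hx hy h
    by_cases he : x = y
    · subst he; exact SimpleGraph.Reachable.refl _
    · obtain ⟨x', hsat', hd1, hd2⟩ := nocycle_step hdistinct hnc hx hy he
      have hadj : (solGraph {x : Fin m → Bool | TwoCnf.Sat ψ x}).Adj ⟨x, hx⟩ ⟨x', hsat'⟩ := hd1
      exact hadj.reachable.trans (ih x' y hsat' hy (by omega))

end TwoCnfProof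

/-- For a satisfiable 2-CNF formula with clauses on distinct variables and
no forced variable, the solution graph is disconnected iff the implication graph contains
a directed cycle. -/
theorem twoCnf_disconnected_iff_implication_cycle {m : ℕ} (ψ : TwoCnf m)
    (hdistinct : ∀ C ∈ ψ, (C.1).1 ≠ (C.2).1)
    (hsat : ∃ x, ψ.Sat x)
    (hfree : ∀ (i : Fin m) (v : Bool), ∃ x, ψ.Sat x ∧ x i = v) :
    ¬ (solGraph {x : Fin m → Bool | ψ.Sat x}).Connected ↔
      ∃ l : Lit m, Relation.TransGen (impEdge ψ) l l := by
  constructor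
  · intro hdisc
    by_contra hcyc
    push_neg at hcyc
    apply hdisc
    rw [SimpleGraph.connected_iff]
    obtain ⟨x₀, hx₀⟩ := hsat
    refine ⟨fun u v => ?_, ⟨⟨x₀, hx₀⟩⟩⟩
    obtain ⟨x, hx⟩ := u
    obtain ⟨y, hy⟩ := v
    exact nocycle_reach hdistinct hcyc (hammingDist x y) x y hx hy le_rfl
  · rintro ⟨l, hc⟩
    exact cycle_disconnects hdistinct hfree hc
end
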